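/- Let M > 0, q ∈ [−1,1], k ∈ ℝ, and 0 < E < 1. Then there exists r₀ ∈ [r₊, ∞), where r₊ = M(1+√(1−q²)), such that (E − k/r₀)² = f(r₀), where f(r) = 1 − 2M/r + q²M²/r². -/

import Mathlib

/-- For `M > 0`, `q ∈ [−1,1]`, `k ∈ ℝ`, and `0 < E < 1`, there exists
`r₀ ∈ [r₊, ∞)`, `r₊ = M(1+√(1−q²))`, such that `(E − k/r₀)² = f(r₀)`, where
`f(r) = 1 − 2M/r + q²M²/r²` (a turning radius for the collapsing surface). -/
theorem stmt_8 (M q k E : ℝ) (hM : 0 < M) (hq : q ∈ Set.Icc (-1 : ℝ) 1)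
    (hE : 0 < E) (hE1 : E < 1)
    (rp : ℝ) (hrp : rp = M * (1 + Real.sqrt (1 - q ^ 2)))
    (f : ℝ → ℝ) (hf : ∀ r, f r = 1 - 2 * M / r + q ^ 2 * M ^ 2 / r ^ 2) :
    ∃ r₀ ∈ Set.Ici rp, (E - k / r₀) ^ 2 = f r₀ := by
  have hq2 : (0:ℝ) ≤ 1 - q ^ 2 := by nlinarith [hq.1, hq.2]
  have hs : 0 ≤ Real.sqrt (1 - q ^ 2) := Real.sqrt_nonneg _
  have hs2 : Real.sqrt (1 - q ^ 2) ^ 2 = 1 - q ^ 2 := Real.sq_sqrt hq2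
  have hrp0 : 0 < rp := by rw [hrp]; positivity
  set g : ℝ → ℝ := fun r => (E - k * r⁻¹) ^ 2 - (1 - 2 * M * r⁻¹ + q ^ 2 * M ^ 2 * (r⁻¹) ^ 2)
    with hg
  have hgval : ∀ r : ℝ, g r = (E - k / r) ^ 2 - f r := by
    intro r
    simp only [hg, hf r, div_eq_mul_inv]
    ring
  -- f rp = 0
  have hfrp : f rp = 0 := by
    rw [hf]
    have hrpne : rp ≠ 0 := ne_of_gt hrp0
    field_simp
    rw [hrp]
    linear_combination M ^ 2 * hs2
  have hgrp : 0 ≤ g rp := by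
    rw [hgval, hfrp, sub_zero]; positivity
  -- limit of g at infinity is E^2 - 1 < 0
  have hinv : Filter.Tendsto (fun r : ℝ => r⁻¹) Filter.atTop (nhds 0) :=
    tendsto_inv_atTop_zero
  have hlim : Filter.Tendsto g Filter.atTop (nhds (E ^ 2 - 1)) := by
    have : Filter.Tendsto g Filter.atTop
        (nhds ((E - k * 0) ^ 2 - (1 - 2 * M * 0 + q ^ 2 * M ^ 2 * 0 ^ 2))) := by
      apply Filter.Tendsto.sub
      · exact ((tendsto_const_nhds.sub (tendsto_const_nhds.mul hinv)).pow 2)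
      · exact (tendsto_const_nhds.sub (tendsto_const_nhds.mul hinv)).add
          (tendsto_const_nhds.mul (hinv.pow 2))
    convert this using 2
    ring
  have hneg : E ^ 2 - 1 < 0 := by nlinarith
  have hev : ∀ᶠ r in Filter.atTop, g r < 0 :=
    hlim.eventually (eventually_lt_nhds hneg) |>.mono (fun x hx => hx)
  obtain ⟨R₀, hR₀⟩ := Filter.eventually_atTop.mp hev
  set R := max R₀ rp with hR
  have hgR : g R < 0 := hR₀ R (le_max_left _ _)
  have hrpR : rp ≤ R := le_max_right _ _
  -- continuity of g on [rp, R]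
  have hne : ∀ x ∈ Set.Icc rp R, x ≠ 0 := fun x hx => ne_of_gt (lt_of_lt_of_le hrp0 hx.1)
  have hcont : ContinuousOn g (Set.Icc rp R) := by
    have hci : ContinuousOn (fun r : ℝ => r⁻¹) (Set.Icc rp R) :=
      ContinuousOn.inv₀ continuousOn_id hne
    exact (((continuousOn_const.sub (continuousOn_const.mul hci)).pow 2).sub
      ((continuousOn_const.sub (continuousOn_const.mul hci)).add
        (continuousOn_const.mul (hci.pow 2))))
  have hIcc : (0:ℝ) ∈ Set.Icc (g R) (g rp) := ⟨le_of_lt hgR, hgrp⟩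
  obtain ⟨r₀, hr₀mem, hr₀⟩ := intermediate_value_Icc' hrpR hcont hIcc
  refine ⟨r₀, hr₀mem.1, ?_⟩
  have := hgval r₀
  rw [hr₀] at this
  linarith [this]
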